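/- arXiv:1312.5875 — 9 statements merged into one kernel-verified Lean document; each statement's English description precedes it below -/
import Mathlib

section
/- Let G be a totally disconnected, locally compact Hausdorff topological group and α an automorphism of G (a bi-continuous group automorphism). If α is expansive, i.e. there exists an identity neighbourhood U ⊆ G with ⋂_{n ∈ ℤ} αⁿ(U) = {1}, then G is metrizable. -/
open Filter Topology

private lemma zpow_cont {G : Type*} [Group G] [TopologicalSpace G]
    (α : MulAut G) (hα : Continuous ⇑α) (hα' : Continuous ⇑(α⁻¹)) :
    ∀ n : ℤ, Continuous ⇑(α ^ n) := by
  intro n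
  induction n using Int.induction_on with
  | zero => simpa using continuous_id
  | succ k ih =>
      have : (α ^ ((k : ℤ) + 1)) = (α ^ (k : ℤ)) * α := by rw [zpow_add, zpow_one]
      rw [this]
      exact ih.comp hα
  | pred k ih =>
      have : (α ^ (-(k : ℤ) - 1)) = (α ^ (-(k : ℤ))) * α⁻¹ := by
        rw [sub_eq_add_neg, zpow_add, zpow_neg_one]
      rw [this]
      exact ih.comp hα'

/-- An expansive automorphism of a totally disconnected, locally compact group
forces the group to be metrizable. -/
theorem expansive_metrizable {G : Type*} [Group G] [TopologicalSpace G]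
    [IsTopologicalGroup G] [T2Space G] [LocallyCompactSpace G] [TotallyDisconnectedSpace G]
    (α : MulAut G) (hα : Continuous ⇑α) (hα' : Continuous ⇑(α⁻¹))
    (hexp : ∃ U ∈ 𝓝 (1 : G), ⋂ n : ℤ, ⇑(α ^ n) '' U = {1}) :
    TopologicalSpace.MetrizableSpace G := by
  obtain ⟨U, hU, hUint⟩ := hexp
  obtain ⟨K, hK, hKU, hKc⟩ := local_compact_nhds hU
  have hcont : ∀ n : ℤ, Continuous ⇑(α ^ n) := zpow_cont α hα hα'
  -- each image of K is a compact neighborhood of 1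
  have himg_eq : ∀ (n : ℤ) (S : Set G), ⇑(α ^ n) '' S = ⇑(α ^ (-n)) ⁻¹' S := by
    intro n S
    rw [← MulEquiv.coe_toEquiv, Equiv.image_eq_preimage_symm, zpow_neg]
    rfl
  have hnhds : ∀ n : ℤ, ⇑(α ^ n) '' K ∈ 𝓝 (1 : G) := by
    intro n
    rw [himg_eq]
    have h1 : (α ^ (-n)) (1 : G) = 1 := map_one _
    exact (hcont (-n)).continuousAt.preimage_mem_nhds (by rwa [h1])
  have himg_compact : ∀ n : ℤ, IsCompact (⇑(α ^ n) '' K) := fun n => hKc.image (hcont n)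
  -- the nested sets
  set W : ℕ → Set G := fun k => ⋂ n ∈ Finset.Icc (-(k : ℤ)) (k : ℤ), ⇑(α ^ n) '' K with hW
  have hWnhds : ∀ k, W k ∈ 𝓝 (1 : G) := fun k =>
    (Filter.biInter_finset_mem _).2 fun n _ => hnhds n
  have hWclosed : ∀ k, IsClosed (W k) :=
    fun k => isClosed_biInter fun n _ => (himg_compact n).isClosed
  have hWsub : ∀ k, W k ⊆ ⇑(α ^ (0 : ℤ)) '' K := by
    intro k
    exact Set.biInter_subset_of_mem (Finset.mem_Icc.mpr (by omega))
  have hWcompact : ∀ k, IsCompact (W k) :=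
    fun k => (himg_compact 0).of_isClosed_subset (hWclosed k) (hWsub k)
  have hWanti : Antitone W := by
    intro a b hab
    exact Set.biInter_mono (Finset.Icc_subset_Icc (by simp [hab]) (by simp [hab])) fun _ _ => le_rfl
  have hWinter : ⋂ k, W k ⊆ {1} := by
    intro x hx
    rw [← hUint]
    refine Set.mem_iInter.2 fun n => ?_
    have hx' := Set.mem_iInter.1 hx n.natAbs
    have hn : n ∈ Finset.Icc (-(n.natAbs : ℤ)) (n.natAbs : ℤ) := by
      simp only [Finset.mem_Icc]
      omega
    have := Set.mem_iInter₂.1 hx' n hn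
    exact Set.image_mono hKU this
  -- W is a basis of 𝓝 1
  have hbasis : (𝓝 (1 : G)).HasBasis (fun _ : ℕ => True) W := by
    constructor
    intro V
    constructor
    · intro hV
      obtain ⟨O, hOV, hOopen, hO1⟩ := mem_nhds_iff.1 hV
      by_contra h
      push_neg at h
      have hne : ∀ k, (W k ∩ Oᶜ).Nonempty := by
        intro k
        obtain ⟨x, hx1, hx2⟩ := Set.not_subset.1 fun hsub => h k trivial (hsub.trans hOV)
        exact ⟨x, hx1, hx2⟩
      have hd : Directed (· ⊇ ·) (fun k => W k ∩ Oᶜ) := by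
        intro a b
        exact ⟨max a b, Set.inter_subset_inter_left _ (hWanti (le_max_left a b)),
          Set.inter_subset_inter_left _ (hWanti (le_max_right a b))⟩
      obtain ⟨x, hx⟩ := IsCompact.nonempty_iInter_of_directed_nonempty_isCompact_isClosed
        (fun k => W k ∩ Oᶜ) hd hne
        (fun k => ((hWcompact k).inter_right hOopen.isClosed_compl))
        (fun k => (hWclosed k).inter hOopen.isClosed_compl)
      have hx1 : x ∈ ⋂ k, W k := Set.mem_iInter.2 fun k => (Set.mem_iInter.1 hx k).1
      have : x = 1 := hWinter hx1
      exact (Set.mem_iInter.1 hx 0).2 (this ▸ hO1)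
    · rintro ⟨k, -, hk⟩
      exact Filter.mem_of_superset (hWnhds k) hk
  haveI : (𝓝 (1 : G)).IsCountablyGenerated := hbasis.isCountablyGenerated
  letI : UniformSpace G := IsTopologicalGroup.rightUniformSpace G
  haveI : (uniformity G).IsCountablyGenerated := by
    rw [uniformity_eq_comap_nhds_one']
    exact Filter.comap.isCountablyGenerated _ _
  exact UniformSpace.metrizableSpace
end

section
/- Let G be a totally disconnected, locally compact group and α an expansive automorphism of G. Then G has an α-stable, σ-compact open subgroup. -/
open Filter Topology Set Pointwise

/-- A totally disconnected, locally compact group with an expansive automorphism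
has an α-stable, σ-compact open subgroup. -/
theorem expansive_exists_stable_sigmaCompact_openSubgroup {G : Type*} [Group G]
    [TopologicalSpace G] [IsTopologicalGroup G] [T2Space G] [LocallyCompactSpace G]
    [TotallyDisconnectedSpace G]
    (α : MulAut G) (hα : Continuous ⇑α) (hα' : Continuous ⇑(α⁻¹))
    (hexp : ∃ U ∈ 𝓝 (1 : G), ⋂ n : ℤ, ⇑(α ^ n) '' U = {1}) :
    ∃ H : OpenSubgroup G, ⇑α '' (H : Set G) = (H : Set G) ∧ IsSigmaCompact (H : Set G) := by
  -- continuity of all integer powers of α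
  have hcont : ∀ n : ℤ, Continuous ⇑(α ^ n) := by
    intro n
    induction n using Int.induction_on with
    | zero => simpa using continuous_id
    | succ k ih =>
        have : (α ^ ((k : ℤ) + 1)) = α ^ (k : ℤ) * α := by rw [zpow_add_one]
        rw [this]
        exact ih.comp hα
    | pred k ih =>
        have : (α ^ (-(k : ℤ) - 1)) = α ^ (-(k : ℤ)) * α⁻¹ := by rw [zpow_sub_one]
        rw [this]
        exact ih.comp hα'
  -- a compact open symmetric neighbourhood T of 1
  obtain ⟨K, hKc, hKn⟩ := exists_compact_mem_nhds (1 : G)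
  obtain ⟨V, hVclopen, hV1, hVK⟩ :=
    loc_compact_Haus_tot_disc_of_zero_dim.mem_nhds_iff.mp
      ((isOpen_interior.mem_nhds (mem_interior_iff_mem_nhds.mpr hKn)) : interior K ∈ 𝓝 1)
  have hVK' : V ⊆ K := hVK.trans interior_subset
  have hVcomp : IsCompact V := hKc.of_isClosed_subset hVclopen.isClosed hVK'
  set T : Set G := V ∩ V⁻¹ with hT
  have hTopen : IsOpen T := hVclopen.isOpen.inter hVclopen.isOpen.inv
  have hTcomp : IsCompact T :=
    hVcomp.of_isClosed_subset (hVclopen.isClosed.inter hVclopen.isClosed.inv)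
      inter_subset_left
  have hT1 : (1 : G) ∈ T := ⟨hV1, by simpa using hV1⟩
  have hTsymm : T⁻¹ = T := by
    rw [hT, Set.inter_inv, inv_inv, Set.inter_comm]
  -- building blocks
  set A : ℕ → Set G := fun j => ⋃ n ∈ Finset.Icc (-(j : ℤ)) (j : ℤ), ⇑(α ^ n) '' T with hA
  have hA1 : ∀ j, (1 : G) ∈ A j := by
    intro j
    exact Set.mem_iUnion₂.mpr ⟨0, by simp, 1, hT1, map_one _⟩
  have hAmono : ∀ j k : ℕ, j ≤ k → A j ⊆ A k := by
    intro j k hjk x hx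
    obtain ⟨n, hn, hxn⟩ := Set.mem_iUnion₂.mp hx
    refine Set.mem_iUnion₂.mpr ⟨n, ?_, hxn⟩
    simp only [Finset.mem_Icc] at hn ⊢
    omega
  have hAcomp : ∀ j, IsCompact (A j) := by
    intro j
    refine (Finset.Icc (-(j : ℤ)) (j : ℤ)).isCompact_biUnion (fun n _ => ?_)
    exact hTcomp.image (hcont n)
  have hAsymm : ∀ j, (A j)⁻¹ = A j := by
    intro j
    ext x
    simp only [hA, Set.mem_inv, Set.mem_iUnion, Set.mem_image]
    constructor
    · rintro ⟨n, hn, t, ht, hte⟩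
      refine ⟨n, hn, t⁻¹, by rwa [← hTsymm, Set.mem_inv, inv_inv], ?_⟩
      rw [map_inv, hte, inv_inv]
    · rintro ⟨n, hn, t, ht, hte⟩
      refine ⟨n, hn, t⁻¹, by rwa [← hTsymm, Set.mem_inv, inv_inv], ?_⟩
      rw [map_inv, hte]
  have hAshift : ∀ j, ⇑α '' A j ⊆ A (j + 1) := by
    intro j x hx
    obtain ⟨y, hy, rfl⟩ := hx
    obtain ⟨n, hn, t, ht, rfl⟩ := by
      simpa only [hA, Set.mem_iUnion, Set.mem_image] using hy
    refine Set.mem_iUnion₂.mpr ⟨n + 1, ?_, t, ht, ?_⟩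
    · simp only [Finset.mem_Icc] at hn ⊢; omega
    · rw [show n + 1 = 1 + n by ring, zpow_add, zpow_one]
      rfl
  have hAshift' : ∀ j, ⇑α⁻¹ '' A j ⊆ A (j + 1) := by
    intro j x hx
    obtain ⟨y, hy, rfl⟩ := hx
    obtain ⟨n, hn, t, ht, rfl⟩ := by
      simpa only [hA, Set.mem_iUnion, Set.mem_image] using hy
    refine Set.mem_iUnion₂.mpr ⟨n - 1, ?_, t, ht, ?_⟩
    · simp only [Finset.mem_Icc] at hn ⊢; omega
    · rw [show n - 1 = -1 + n by ring, zpow_add, zpow_neg_one]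
      rfl
  -- the subgroup
  set L : Subgroup G :=
    { carrier := ⋃ j : ℕ, A j ^ (j + 1)
      one_mem' := Set.mem_iUnion.mpr ⟨0, by simpa using hA1 0⟩
      mul_mem' := by
        rintro a b ha hb
        obtain ⟨j, hj⟩ := Set.mem_iUnion.mp ha
        obtain ⟨k, hk⟩ := Set.mem_iUnion.mp hb
        refine Set.mem_iUnion.mpr ⟨j + k + 1, ?_⟩
        have h1 : A j ^ (j + 1) ⊆ A (j + k + 1) ^ (j + 1) :=
          Set.pow_subset_pow_left (hAmono _ _ (by omega))
        have h2 : A k ^ (k + 1) ⊆ A (j + k + 1) ^ (k + 1) :=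
          Set.pow_subset_pow_left (hAmono _ _ (by omega))
        have : a * b ∈ A (j + k + 1) ^ (j + 1) * A (j + k + 1) ^ (k + 1) :=
          Set.mul_mem_mul (h1 hj) (h2 hk)
        rwa [← pow_add, show j + 1 + (k + 1) = j + k + 1 + 1 by omega] at this
      inv_mem' := by
        rintro a ha
        obtain ⟨j, hj⟩ := Set.mem_iUnion.mp ha
        refine Set.mem_iUnion.mpr ⟨j, ?_⟩
        rw [← hAsymm j]
        simpa only [inv_pow, Set.mem_inv, inv_inv] using hj } with hL
  have hLcarrier : (L : Set G) = ⋃ j : ℕ, A j ^ (j + 1) := rfl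
  have hTL : T ⊆ (L : Set G) := by
    intro x hx
    refine Set.mem_iUnion.mpr ⟨0, ?_⟩
    have hxA : x ∈ A 0 := Set.mem_iUnion₂.mpr ⟨(0 : ℤ), by simp, x, hx, by simp⟩
    simpa using hxA
  have hLopen : IsOpen (L : Set G) :=
    L.isOpen_of_mem_nhds (Filter.mem_of_superset (hTopen.mem_nhds hT1) hTL)
  refine ⟨⟨L, hLopen⟩, ?_, ?_⟩
  · -- α-stability
    show ⇑α '' (L : Set G) = (L : Set G)
    have hsub : ∀ (β : MulAut G), (∀ j, ⇑β '' A j ⊆ A (j + 1)) →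
        ⇑β '' (L : Set G) ⊆ (L : Set G) := by
      intro β hβ x hx
      obtain ⟨y, hy, rfl⟩ := hx
      obtain ⟨j, hj⟩ := Set.mem_iUnion.mp hy
      refine Set.mem_iUnion.mpr ⟨j + 1, ?_⟩
      have : β y ∈ (⇑β '' A j) ^ (j + 1) := by
        rw [← Set.image_pow]
        exact ⟨y, hj, rfl⟩
      exact Set.pow_subset_pow (hβ j) (hA1 (j + 1)) (by omega) this
    have h1 : ⇑α '' (L : Set G) ⊆ (L : Set G) := hsub α hAshift
    have h2 : ⇑α⁻¹ '' (L : Set G) ⊆ (L : Set G) := hsub α⁻¹ hAshift'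
    apply Set.Subset.antisymm h1
    intro x hx
    refine ⟨α⁻¹ x, h2 ⟨x, hx, rfl⟩, ?_⟩
    simp
  · -- σ-compactness
    show IsSigmaCompact (L : Set G)
    rw [hLcarrier]
    refine isSigmaCompact_iUnion_of_isCompact _ (fun j => ?_)
    have hpow : ∀ (s : Set G), IsCompact s → ∀ m : ℕ, IsCompact (s ^ (m + 1)) := by
      intro s hs m
      induction m with
      | zero => simpa using hs
      | succ k ih => rw [pow_succ]; exact ih.mul hs
    exact hpow (A j) (hAcomp j) j
end

section
/- Let K be a compact Hausdorff topological group and D ⊆ K a subgroup that is divisible (for every d ∈ D and every m ≥ 1 there exists x ∈ D with xᵐ = d). Then the closure of D in K is also divisible. -/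
open Filter Topology

/-- The closure of a divisible subgroup of a compact Hausdorff group is divisible. -/
theorem closure_divisible {K : Type*} [Group K] [TopologicalSpace K] [IsTopologicalGroup K]
    [T2Space K] [CompactSpace K]
    (D : Subgroup K) (hD : ∀ d ∈ D, ∀ m : ℕ, 0 < m → ∃ x ∈ D, x ^ m = d) :
    ∀ d ∈ closure (D : Set K), ∀ m : ℕ, 0 < m → ∃ x ∈ closure (D : Set K), x ^ m = d := by
  intro d hd m hm
  have hS : IsCompact (closure (D : Set K)) := isClosed_closure.isCompact
  have himg : IsClosed ((fun x : K => x ^ m) '' closure (D : Set K)) :=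
    (hS.image (continuous_pow m)).isClosed
  have hsub : (D : Set K) ⊆ (fun x : K => x ^ m) '' closure (D : Set K) := by
    intro y hy
    obtain ⟨x, hxD, hx⟩ := hD y hy m hm
    exact ⟨x, subset_closure hxD, hx⟩
  obtain ⟨x, hx, hxe⟩ := closure_minimal hsub himg hd
  exact ⟨x, hx, hxe⟩
end

section
/- Let G be a locally compact Hausdorff group, α an automorphism of G, and H ⊆ G an α-stable subgroup such that α|_H is contractive (αⁿ(h) → 1 for all h ∈ H). If H has a compact neighbourhood of 1 in its closure H̄, then H̄ is σ-compact. -/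
open Filter Topology Set Pointwise

private lemma pow_mono_of_one_mem {G : Type*} [Group G] {s : Set G} (h1 : (1:G) ∈ s)
    {a b : ℕ} (hab : a ≤ b) : s ^ a ⊆ s ^ b := by
  induction b with
  | zero => simpa [Nat.le_zero.mp hab] using subset_rfl
  | succ b ih =>
    rcases Nat.lt_or_ge a (b+1) with h | h
    · intro x hx
      rw [pow_succ]
      exact mul_one x ▸ Set.mul_mem_mul (ih (Nat.lt_succ_iff.mp h) hx) h1
    · have : a = b + 1 := le_antisymm hab h
      subst this; exact subset_rfl

private lemma pow_subset_pow_left' {G : Type*} [Group G] {s t : Set G} (h : s ⊆ t)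
    (n : ℕ) : s ^ n ⊆ t ^ n := by
  induction n with
  | zero => simp
  | succ n ih => rw [pow_succ, pow_succ]; exact Set.mul_subset_mul ih h

/-- If H is an α-stable subgroup of a locally compact group on which α is contractive,
and the closure of H contains a compact neighbourhood of 1 (relative to the closure),
then the closure of H is σ-compact. -/
theorem closure_contraction_sigmaCompact {G : Type*} [Group G] [TopologicalSpace G]
    [IsTopologicalGroup G] [T2Space G] [LocallyCompactSpace G]
    (α : MulAut G) (hα : Continuous ⇑α) (hα' : Continuous ⇑(α⁻¹))
    (H : Subgroup G) (hst : ⇑α '' (H : Set G) = (H : Set G))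
    (hc : ∀ h ∈ H, Tendsto (fun n : ℕ => (α ^ n) h) atTop (𝓝 1))
    (K : Set G) (hKc : IsCompact K) (hKsub : K ⊆ closure (H : Set G))
    (hKnhd : K ∈ 𝓝[closure (H : Set G)] (1 : G)) :
    IsSigmaCompact (closure (H : Set G)) := by
  classical
  set C : Set G := closure (H : Set G) with hC
  set f : G → G := ⇑(α⁻¹) with hf
  -- basic facts about C as a subgroup set
  have hCsub : (H.topologicalClosure : Set G) = C := rfl
  have hCone : (1 : G) ∈ C := subset_closure H.one_mem
  have hCmul : ∀ x ∈ C, ∀ y ∈ C, x * y ∈ C := fun x hx y hy =>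
    H.topologicalClosure.mul_mem hx hy
  have hCinv : ∀ x ∈ C, x⁻¹ ∈ C := fun x hx => H.topologicalClosure.inv_mem hx
  have hHC : (H : Set G) ⊆ C := subset_closure
  -- α ^ n as iterate
  have hpow : ∀ (n : ℕ) (x : G), (α ^ n) x = (⇑α)^[n] x := by
    intro n
    induction n with
    | zero => intro x; simp
    | succ n ih =>
      intro x
      rw [pow_succ, Function.iterate_succ, Function.comp_apply, MulAut.mul_apply, ih]
  have hfinv : ∀ (n : ℕ) (x : G), f^[n] ((⇑α)^[n] x) = x := by
    intro n
    induction n with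
    | zero => intro x; simp
    | succ n ih =>
      intro x
      rw [Function.iterate_succ_apply (⇑α), Function.iterate_succ_apply' f, ih (α x)]
      exact MulAut.inv_apply_self G α x
  have hfC : f '' C ⊆ C := by
    have h1 : f '' (H : Set G) = (H : Set G) := by
      conv_lhs => rw [← hst]
      ext x
      constructor
      · rintro ⟨y, ⟨z, hz, rfl⟩, rfl⟩
        simpa [hf, MulAut.inv_apply_self] using hz
      · intro hx
        exact ⟨α x, ⟨x, hx, rfl⟩, MulAut.inv_apply_self G α x⟩
    calc f '' C ⊆ closure (f '' (H : Set G)) := image_closure_subset_closure_image hα'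
      _ = C := by rw [h1]
  have hfcont : ∀ n : ℕ, Continuous (f^[n]) := fun n => by
    induction n with
    | zero => simpa using continuous_id
    | succ n ih => rw [Function.iterate_succ]; exact ih.comp hα'
  -- the compact pieces
  set Kn : ℕ → Set G := fun n => f^[n] '' K with hKn
  have hKnc : ∀ n, IsCompact (Kn n) := fun n => hKc.image (hfcont n)
  have hKnC : ∀ n, Kn n ⊆ C := by
    intro n
    induction n with
    | zero => simpa [hKn] using hKsub
    | succ n ih =>
      have : Kn (n+1) = f '' Kn n := by
        simp only [hKn, Function.iterate_succ', Set.image_comp]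
      rw [this]
      exact (Set.image_mono ih).trans hfC
  set S : Set G := ⋃ n, Kn n with hS
  have hSC : S ⊆ C := Set.iUnion_subset hKnC
  set W : Subgroup G := Subgroup.closure S with hW
  have hSW : S ⊆ (W : Set G) := Subgroup.subset_closure
  have hKW : K ⊆ (W : Set G) := by
    intro x hx
    exact hSW (Set.mem_iUnion.mpr ⟨0, by simpa [hKn] using hx⟩)
  -- H ⊆ W
  have hHW : (H : Set G) ⊆ (W : Set G) := by
    intro h hh
    have htend : Tendsto (fun n : ℕ => (α ^ n) h) atTop (𝓝[C] 1) := by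
      rw [tendsto_nhdsWithin_iff]
      refine ⟨hc h hh, Eventually.of_forall fun n => ?_⟩
      have : (α ^ n) h ∈ H := by
        have := hst
        have hstep : ∀ x ∈ H, α x ∈ H := by
          intro x hx
          have : α x ∈ ⇑α '' (H : Set G) := ⟨x, hx, rfl⟩
          rwa [hst] at this
        induction n with
        | zero => simpa using hh
        | succ n ih => rw [hpow, Function.iterate_succ', Function.comp_apply]
                       exact hstep _ (by rwa [← hpow])
      exact hHC this
    have := htend.eventually_mem hKnhd
    obtain ⟨n, hn⟩ := this.exists
    have : h = f^[n] ((α ^ n) h) := by rw [hpow]; exact (hfinv n h).symm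
    rw [this]
    exact hSW (Set.mem_iUnion.mpr ⟨n, ⟨(α ^ n) h, hn, rfl⟩⟩)
  -- W ⊆ C
  have hWC : (W : Set G) ⊆ C := by
    have : W ≤ H.topologicalClosure := Subgroup.closure_le _ |>.mpr hSC
    exact this
  -- C ⊆ W
  have hCW : C ⊆ (W : Set G) := by
    intro x hx
    obtain ⟨O, hOopen, hO1, hOK⟩ := mem_nhdsWithin.mp hKnhd
    have hopen : IsOpen ((fun o => x * o⁻¹) '' O) := by
      have : (fun o => x * o⁻¹) '' O = (fun y => x * y) '' O⁻¹ := by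
        ext z; constructor
        · rintro ⟨o, ho, rfl⟩; exact ⟨o⁻¹, Set.inv_mem_inv.mpr ho, rfl⟩
        · rintro ⟨y, hy, rfl⟩; exact ⟨y⁻¹, by simpa using hy, by simp⟩
      rw [this]
      simpa using (Homeomorph.mulLeft x).isOpenMap O⁻¹ hOopen.inv
    have hxmem : x ∈ (fun o => x * o⁻¹) '' O := ⟨1, hO1, by simp⟩
    obtain ⟨h, hhO, hhH⟩ := mem_closure_iff.mp hx _ hopen hxmem
    obtain ⟨o, ho, rfl⟩ := hhO
    -- h = x * o⁻¹, so h⁻¹ * x = o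
    have hinv : (x * o⁻¹)⁻¹ * x = o := by group
    have hoC : o ∈ C := by
      rw [← hinv]
      exact hCmul _ (hCinv _ (hHC hhH)) _ hx
    have hoK : o ∈ K := hOK ⟨ho, hoC⟩
    have : x = (x * o⁻¹) * o := by group
    rw [this]
    exact W.mul_mem (hHW hhH) (hKW hoK)
  have hWCeq : (W : Set G) = C := Set.Subset.antisymm hWC hCW
  -- accumulated compact sets
  have hBn : ∀ n : ℕ, IsCompact (⋃ m ∈ Finset.range (n+1), Kn m) := by
    intro n
    exact (Finset.range (n+1)).finite_toSet.isCompact_biUnion fun m _ => hKnc m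
  set B : ℕ → Set G := fun n => ⋃ m ∈ Finset.range (n+1), Kn m with hB
  have hBmono : Monotone B := by
    intro a b hab x hx
    simp only [hB, Set.mem_iUnion, Finset.mem_range] at hx ⊢
    obtain ⟨m, hm, hx⟩ := hx
    exact ⟨m, by omega, hx⟩
  have hBS : ∀ n, B n ⊆ S := fun n =>
    Set.iUnion₂_subset fun m _ => Set.subset_iUnion Kn m
  set T : ℕ → Set G := fun n => B n ∪ (B n)⁻¹ ∪ {1} with hT
  have hTc : ∀ n, IsCompact (T n) :=
    fun n => (((hBn n).union (hBn n).inv).union isCompact_singleton)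
  have hT1 : ∀ n, (1 : G) ∈ T n := fun n => Or.inr rfl
  have hTmono : Monotone T := by
    intro a b hab
    exact Set.union_subset_union (Set.union_subset_union (hBmono hab)
      (Set.inv_subset_inv.mpr (hBmono hab))) subset_rfl
  have hTW : ∀ n, T n ⊆ (W : Set G) := by
    intro n x hx
    rcases hx with (hx | hx) | hx
    · exact hSW (hBS n hx)
    · have : x⁻¹ ∈ S := hBS n (Set.mem_inv.mp hx)
      simpa using W.inv_mem (hSW this)
    · simp only [Set.mem_singleton_iff] at hx; rw [hx]; exact W.one_mem
  have hTnW : ∀ n k, T n ^ k ⊆ (W : Set G) := by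
    intro n k
    induction k with
    | zero =>
      intro x hx
      rw [pow_zero, ← Set.singleton_one, Set.mem_singleton_iff] at hx
      rw [hx]; exact W.one_mem
    | succ k ih =>
      rw [pow_succ]
      intro x hx
      obtain ⟨a, ha, b, hb, rfl⟩ := hx
      exact W.mul_mem (ih ha) (hTW n hb)
  -- every element of W is in some T n ^ n
  have hmain : ∀ x ∈ W, ∃ n, x ∈ T n ^ n := by
    intro x hx
    have hx' : x ∈ Submonoid.closure (S ∪ S⁻¹) := by
      rw [← Subgroup.closure_toSubmonoid] at *
      exact hx
    obtain ⟨l, hl, rfl⟩ := Submonoid.exists_list_of_mem_closure hx'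
    clear hx hx'
    induction l with
    | nil => exact ⟨0, by simp⟩
    | cons y l ih =>
      obtain ⟨n, hn⟩ := ih fun z hz => hl z (List.mem_cons_of_mem y hz)
      have hy : y ∈ S ∪ S⁻¹ := hl y (List.mem_cons_self (a := y) (l := l))
      have hym : ∃ m, y ∈ T m := by
        rcases hy with hy | hy
        · obtain ⟨m, hm⟩ := Set.mem_iUnion.mp hy
          exact ⟨m, Or.inl (Or.inl (Set.mem_biUnion (Finset.mem_range.mpr (Nat.lt_succ_self m)) hm))⟩
        · obtain ⟨m, hm⟩ := Set.mem_iUnion.mp (Set.mem_inv.mp hy)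
          refine ⟨m, Or.inl (Or.inr ?_)⟩
          rw [Set.mem_inv]
          exact Set.mem_biUnion (Finset.mem_range.mpr (Nat.lt_succ_self m)) hm
      obtain ⟨m, hym⟩ := hym
      refine ⟨max n m + 1, ?_⟩
      have h1 : y ∈ T (max n m + 1) := hTmono (le_trans (le_max_right n m) (Nat.le_succ _)) hym
      have h2 : l.prod ∈ T (max n m + 1) ^ (max n m) := by
        have := pow_subset_pow_left' (hTmono (le_trans (le_max_left n m) (Nat.le_succ _))) n hn
        exact pow_mono_of_one_mem (hT1 _) (le_max_left n m) this
      rw [List.prod_cons, pow_succ']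
      exact Set.mul_mem_mul h1 h2
  have hpowc : ∀ (s : Set G), IsCompact s → ∀ k, IsCompact (s ^ k) := by
    intro s hs k
    induction k with
    | zero => rw [pow_zero, ← Set.singleton_one]; exact isCompact_singleton
    | succ k ih => rw [pow_succ]; exact ih.mul hs
  refine ⟨fun n => T n ^ n, fun n => hpowc _ (hTc n) n, ?_⟩
  · rw [← hWCeq]
    apply Set.Subset.antisymm
    · exact Set.iUnion_subset fun n => hTnW n n
    · intro x hx
      obtain ⟨n, hn⟩ := hmain x hx
      exact Set.mem_iUnion.mpr ⟨n, hn⟩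
end

section
/- Let G be a topological group with topology τ and α a contractive automorphism of (G, τ). Suppose τ* and τ̂ are both locally compact group topologies on G that are finer than τ and such that α is a contractive automorphism with respect to each of them. Then τ* = τ̂. -/
open Filter Topology

/-- Powers of a continuous automorphism are continuous. -/
private lemma continuous_mulAut_pow {G : Type*} [Group G] {σ : TopologicalSpace G}
    {α : MulAut G} (h : @Continuous G G σ σ ⇑α) (n : ℕ) :
    @Continuous G G σ σ ⇑(α ^ n) := by
  induction n with
  | zero =>
    have : ⇑(α ^ 0) = id := by funext g; simp
    rw [this]; exact continuous_id
  | succ n ih =>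
    have : ⇑(α ^ (n + 1)) = ⇑(α ^ n) ∘ ⇑α := by
      funext g; simp [pow_succ, MulAut.mul_apply]
    rw [this]; exact ih.comp h

/-- On subsets of a set compact for a finer topology, the `nhdsWithin` filters of the
finer topology and of a coarser Hausdorff topology agree. -/
private lemma nhdsWithin_eq_of_isCompact {G : Type*} {τ τ₁ : TopologicalSpace G}
    (h2 : @T2Space G τ) (hfine : τ₁ ≤ τ) {C E : Set G} (hC : @IsCompact G τ₁ C)
    (hE : E ⊆ C) (x : G) :
    @nhdsWithin G τ₁ x E = @nhdsWithin G τ x E := by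
  refine le_antisymm (inf_le_inf_right _ (nhds_mono hfine)) ?_
  rw [le_iff_ultrafilter]
  intro U hU
  have hUE : (U : Filter G) ≤ 𝓟 E := hU.trans inf_le_right
  have hUx : (U : Filter G) ≤ @nhds G τ x := hU.trans inf_le_left
  have hUC : (U : Filter G) ≤ 𝓟 C := hUE.trans (Filter.principal_mono.2 hE)
  obtain ⟨y, _, hy⟩ := hC.ultrafilter_le_nhds U hUC
  have hyx : y = x :=
    @eq_of_nhds_neBot G τ h2 y x
      (Filter.neBot_of_le (le_inf (hy.trans (nhds_mono hfine)) hUx))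
  exact le_inf (hyx ▸ hy) hUE

/-- The Baire category step: there is a τ₁-compact set which is a τ₂-neighbourhood of 1. -/
private lemma exists_isCompact_mem_nhds {G : Type*} [Group G]
    (τ τ₁ τ₂ : TopologicalSpace G) (α : MulAut G)
    (hτ₁ : @IsTopologicalGroup G τ₁ _) (hτ₂ : @IsTopologicalGroup G τ₂ _)
    (h2 : @T2Space G τ)
    (hlc₁ : @LocallyCompactSpace G τ₁) (hlc₂ : @LocallyCompactSpace G τ₂)
    (hfine₁ : τ₁ ≤ τ) (hfine₂ : τ₂ ≤ τ)
    (hc₁ : ∀ g : G, Filter.Tendsto (fun n => (α ^ n) g) atTop (@nhds G τ₁ 1))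
    (hcont₂ : @Continuous G G τ₂ τ₂ ⇑α) (hcont₂' : @Continuous G G τ₂ τ₂ ⇑(α⁻¹)) :
    ∃ C : Set G, @IsCompact G τ₁ C ∧ C ∈ @nhds G τ₂ 1 := by
  -- a τ₁-compact neighbourhood K of 1
  obtain ⟨K, hK1, -, hKcomp⟩ := hlc₁.local_compact_nhds 1 Set.univ Filter.univ_mem
  -- the preimages of K under the powers of α cover G
  have hcover : (⋃ n : ℕ, (⇑(α ^ n)) ⁻¹' K) = Set.univ := by
    ext g
    simp only [Set.mem_iUnion, Set.mem_preimage, Set.mem_univ, iff_true]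
    have := (hc₁ g) hK1
    rw [Filter.mem_map] at this
    obtain ⟨N, hN⟩ := Filter.mem_atTop_sets.1 this
    exact ⟨N, hN N le_rfl⟩
  -- K is τ₂-closed
  have hKτ : @IsCompact G τ K := by
    have h := @IsCompact.image G G τ₁ τ _ id hKcomp (continuous_id_of_le hfine₁)
    rwa [Set.image_id] at h
  have hKclτ : @IsClosed G τ K := @IsCompact.isClosed G τ h2 K hKτ
  have hKcl₂ : @IsClosed G τ₂ K := by
    have h := @IsClosed.preimage G G τ₂ τ id (continuous_id_of_le hfine₂) K hKclτ
    rwa [Set.preimage_id] at h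
  have hcl : ∀ n : ℕ, @IsClosed G τ₂ ((⇑(α ^ n)) ⁻¹' K) := fun n =>
    @IsClosed.preimage G G τ₂ τ₂ ⇑(α ^ n) (continuous_mulAut_pow hcont₂ n) K hKcl₂
  -- Baire category theorem in (G, τ₂)
  have hint : ∃ n : ℕ, (@interior G τ₂ ((⇑(α ^ n)) ⁻¹' K)).Nonempty := by
    letI := τ₂
    haveI := hτ₂
    haveI := hlc₂
    haveI : Nonempty G := ⟨1⟩
    exact nonempty_interior_of_iUnion_of_closed hcl hcover
  obtain ⟨n, x, hx⟩ := hint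
  set k : G := (α ^ n) x with hk
  have hxmem : (⇑(α ^ n)) ⁻¹' K ∈ @nhds G τ₂ x := by
    rw [@mem_nhds_iff G τ₂ x]
    exact ⟨@interior G τ₂ ((⇑(α ^ n)) ⁻¹' K), interior_subset, isOpen_interior, hx⟩
  -- K is a τ₂-neighbourhood of k
  have hcontinv : @Continuous G G τ₂ τ₂ ⇑((α ^ n)⁻¹) := by
    rw [← inv_pow]
    exact continuous_mulAut_pow hcont₂' n
  have hKk : K ∈ @nhds G τ₂ k := by
    have hKeq : K = ⇑((α ^ n)⁻¹) ⁻¹' ((⇑(α ^ n)) ⁻¹' K) := by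
      ext g; simp [MulAut.apply_inv_self]
    have h := @ContinuousAt.preimage_mem_nhds G G τ₂ τ₂ (⇑((α ^ n)⁻¹)) k
      ((⇑(α ^ n)) ⁻¹' K) (hcontinv.continuousAt)
      (by rwa [hk, MulAut.inv_apply_self])
    rwa [← hKeq] at h
  -- translate: C := K · k⁻¹
  refine ⟨(fun g => g * k) ⁻¹' K, ?_, ?_⟩
  · have heq : (fun g => g * k) ⁻¹' K = (fun g => g * k⁻¹) '' K := by
      ext g
      constructor
      · intro hg; exact ⟨g * k, hg, by simp⟩
      · rintro ⟨h, hh, rfl⟩; simpa using hh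
    rw [heq]
    have hct : @Continuous G G τ₁ τ₁ (fun g => g * k⁻¹) := by
      letI := τ₁; haveI := hτ₁; exact continuous_mul_right _
    exact @IsCompact.image G G τ₁ τ₁ _ _ hKcomp hct
  · have hct : @Continuous G G τ₂ τ₂ (fun g => g * k) := by
      letI := τ₂; haveI := hτ₂; exact continuous_mul_right _
    exact @ContinuousAt.preimage_mem_nhds G G τ₂ τ₂ _ 1 K hct.continuousAt
      (by rwa [one_mul])

/-- Uniqueness of a finer locally compact group topology making a contractive
automorphism contractive. -/
theorem unique_locally_compact_refinement {G : Type*} [Group G]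
    (τ τ₁ τ₂ : TopologicalSpace G) (α : MulAut G)
    (hτ : @IsTopologicalGroup G τ _) (hτ₁ : @IsTopologicalGroup G τ₁ _)
    (hτ₂ : @IsTopologicalGroup G τ₂ _)
    (h2 : @T2Space G τ) (h2₁ : @T2Space G τ₁) (h2₂ : @T2Space G τ₂)
    (hlc₁ : @LocallyCompactSpace G τ₁) (hlc₂ : @LocallyCompactSpace G τ₂)
    (hfine₁ : τ₁ ≤ τ) (hfine₂ : τ₂ ≤ τ)
    (hcont : @Continuous G G τ τ ⇑α) (hcont' : @Continuous G G τ τ ⇑(α⁻¹))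
    (hc : ∀ g : G, @Filter.Tendsto ℕ G (fun n => (α ^ n) g) atTop (@nhds G τ 1))
    (hcont₁ : @Continuous G G τ₁ τ₁ ⇑α) (hcont₁' : @Continuous G G τ₁ τ₁ ⇑(α⁻¹))
    (hc₁ : ∀ g : G, @Filter.Tendsto ℕ G (fun n => (α ^ n) g) atTop (@nhds G τ₁ 1))
    (hcont₂ : @Continuous G G τ₂ τ₂ ⇑α) (hcont₂' : @Continuous G G τ₂ τ₂ ⇑(α⁻¹))
    (hc₂ : ∀ g : G, @Filter.Tendsto ℕ G (fun n => (α ^ n) g) atTop (@nhds G τ₂ 1)) :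
    τ₁ = τ₂ := by
  obtain ⟨C, hCcomp, hC₂⟩ :=
    exists_isCompact_mem_nhds τ τ₁ τ₂ α hτ₁ hτ₂ h2 hlc₁ hlc₂ hfine₁ hfine₂ hc₁
      hcont₂ hcont₂'
  obtain ⟨D, hDcomp, hD₁⟩ :=
    exists_isCompact_mem_nhds τ τ₂ τ₁ α hτ₂ hτ₁ h2 hlc₂ hlc₁ hfine₂ hfine₁ hc₂
      hcont₁ hcont₁'
  -- C is also a τ₁-neighbourhood of 1 (and symmetrically D a τ₂-neighbourhood)
  have hC₁ : C ∈ @nhds G τ₁ 1 := by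
    have h1 : @nhdsWithin G τ₂ 1 D = @nhdsWithin G τ 1 D :=
      nhdsWithin_eq_of_isCompact h2 hfine₂ hDcomp subset_rfl 1
    have h2' : C ∈ @nhdsWithin G τ₂ 1 D := Filter.mem_inf_of_left hC₂
    rw [h1] at h2'
    have h3 : C ∈ @nhdsWithin G τ₁ 1 D :=
      inf_le_inf_right _ (nhds_mono hfine₁) h2'
    have h4 : @nhdsWithin G τ₁ 1 D = @nhds G τ₁ 1 := @nhdsWithin_eq_nhds G τ₁ 1 D |>.2 hD₁
    rwa [h4] at h3
  have hD₂ : D ∈ @nhds G τ₂ 1 := by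
    have h1 : @nhdsWithin G τ₁ 1 C = @nhdsWithin G τ 1 C :=
      nhdsWithin_eq_of_isCompact h2 hfine₁ hCcomp subset_rfl 1
    have h2' : D ∈ @nhdsWithin G τ₁ 1 C := Filter.mem_inf_of_left hD₁
    rw [h1] at h2'
    have h3 : D ∈ @nhdsWithin G τ₂ 1 C :=
      inf_le_inf_right _ (nhds_mono hfine₂) h2'
    have h4 : @nhdsWithin G τ₂ 1 C = @nhds G τ₂ 1 := @nhdsWithin_eq_nhds G τ₂ 1 C |>.2 hC₂
    rwa [h4] at h3
  -- the intersection E is a neighbourhood of 1 in both topologies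
  set E : Set G := C ∩ D with hE
  have hE₁ : E ∈ @nhds G τ₁ 1 := Filter.inter_mem hC₁ hD₁
  have hE₂ : E ∈ @nhds G τ₂ 1 := Filter.inter_mem hC₂ hD₂
  have key : @nhds G τ₁ 1 = @nhds G τ₂ 1 := by
    calc @nhds G τ₁ 1 = @nhdsWithin G τ₁ 1 E := ((@nhdsWithin_eq_nhds G τ₁ 1 E).2 hE₁).symm
      _ = @nhdsWithin G τ 1 E :=
          nhdsWithin_eq_of_isCompact h2 hfine₁ hCcomp Set.inter_subset_left 1
      _ = @nhdsWithin G τ₂ 1 E :=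
          (nhdsWithin_eq_of_isCompact h2 hfine₂ hDcomp Set.inter_subset_right 1).symm
      _ = @nhds G τ₂ 1 := (@nhdsWithin_eq_nhds G τ₂ 1 E).2 hE₂
  exact IsTopologicalGroup.ext hτ₁ hτ₂ key
end

section
/- Let G be a totally disconnected, locally compact group and α an expansive automorphism. Let V ⊆ G be a compact open subgroup with ⋂_{n ∈ ℤ} αⁿ(V) = {1}, and set V₋ := ⋂_{n ≥ 0} α⁻ⁿ(V). Then for every n ∈ ℕ, αⁿ(V₋) is an open subgroup of V₋, and the family {αⁿ(V₋) : n ∈ ℕ} is a neighbourhood basis at the identity in V₋. -/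
open Filter Topology

/-- For an expansive automorphism with compact open subgroup V satisfying
`⋂_{n∈ℤ} αⁿ(V) = {1}` and `V₋ := ⋂_{n≥0} α⁻ⁿ(V)`: for each n, `αⁿ(V₋)` is a subgroup of
`V₋` that is relatively open in `V₋`, and the family `{αⁿ(V₋) : n ∈ ℕ}` is a
neighbourhood basis of the identity in `V₋`. -/
theorem iterated_images_basis {G : Type*} [Group G] [TopologicalSpace G]
    [IsTopologicalGroup G] [T2Space G] [LocallyCompactSpace G] [TotallyDisconnectedSpace G]
    (α : MulAut G) (hα : Continuous ⇑α) (hα' : Continuous ⇑(α⁻¹))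
    (V : Subgroup G) (hVc : IsCompact (V : Set G)) (hVo : IsOpen (V : Set G))
    (hexp : ⋂ n : ℤ, ⇑(α ^ n) '' (V : Set G) = {1}) :
    (∀ n : ℕ, ⇑(α ^ (n : ℤ)) '' (⋂ m : ℕ, ⇑(α ^ (-(m : ℤ))) '' (V : Set G))
        ⊆ (⋂ m : ℕ, ⇑(α ^ (-(m : ℤ))) '' (V : Set G)) ∧
      (∃ S : Subgroup G, (S : Set G)
        = ⇑(α ^ (n : ℤ)) '' (⋂ m : ℕ, ⇑(α ^ (-(m : ℤ))) '' (V : Set G))) ∧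
      (∃ W : Set G, IsOpen W ∧
        ⇑(α ^ (n : ℤ)) '' (⋂ m : ℕ, ⇑(α ^ (-(m : ℤ))) '' (V : Set G))
          = (⋂ m : ℕ, ⇑(α ^ (-(m : ℤ))) '' (V : Set G)) ∩ W)) ∧
    (𝓝[⋂ m : ℕ, ⇑(α ^ (-(m : ℤ))) '' (V : Set G)] (1 : G)).HasBasis
      (fun _ : ℕ => True)
      (fun n : ℕ => ⇑(α ^ (n : ℤ)) '' (⋂ m : ℕ, ⇑(α ^ (-(m : ℤ))) '' (V : Set G))) := by
  -- continuity of all integer powers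
  have cont : ∀ k : ℤ, Continuous ⇑(α ^ k) := by
    intro k
    induction k using Int.induction_on with
    | zero => simpa using continuous_id
    | succ n ih =>
        have h : ⇑(α ^ ((n : ℤ) + 1)) = ⇑(α ^ (n : ℤ)) ∘ ⇑α := by
          funext x
          rw [zpow_add, zpow_one, Function.comp_apply, MulAut.mul_apply]
        rw [h]; exact ih.comp hα
    | pred n ih =>
        have h : ⇑(α ^ (-(n : ℤ) - 1)) = ⇑(α ^ (-(n : ℤ))) ∘ ⇑α⁻¹ := by
          funext x
          rw [zpow_sub, zpow_one, Function.comp_apply, MulAut.mul_apply]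
        rw [h]; exact ih.comp hα'
  have hfun : ∀ (j k : ℤ) (x : G), (α ^ j) ((α ^ k) x) = (α ^ (j + k)) x := by
    intro j k x; rw [zpow_add, MulAut.mul_apply]
  have hcomp : ∀ (j k : ℤ) (s : Set G), ⇑(α ^ j) '' (⇑(α ^ k) '' s) = ⇑(α ^ (j + k)) '' s := by
    intro j k s
    rw [← Set.image_comp]
    exact Set.image_congr' (fun x => hfun j k x)
  set Vm : Set G := ⋂ m : ℕ, ⇑(α ^ (-(m : ℤ))) '' (V : Set G) with hVm
  set B : ℤ → Set G := fun j => ⇑(α ^ j) '' (V : Set G) with hB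
  have hB1 : ∀ j : ℤ, (1 : G) ∈ B j := fun j => ⟨1, V.one_mem, map_one _⟩
  have hBo : ∀ j : ℤ, IsOpen (B j) := by
    intro j
    have h : B j = ⇑(α ^ (-j)) ⁻¹' (V : Set G) := by
      ext x
      constructor
      · rintro ⟨y, hy, rfl⟩
        have : (α ^ (-j)) ((α ^ j) y) = y := by rw [hfun, neg_add_cancel, zpow_zero]; rfl
        simpa [this] using hy
      · intro hx
        refine ⟨(α ^ (-j)) x, hx, ?_⟩
        rw [hfun, add_neg_cancel, zpow_zero]; rfl
    rw [h]
    exact hVo.preimage (cont (-j))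
  have hBc : ∀ j : ℤ, IsCompact (B j) := fun j => hVc.image (cont j)
  have hBcl : ∀ j : ℤ, IsClosed (B j) := fun j => (hBc j).isClosed
  set A : ℕ → Set G := fun n => ⋂ j ∈ Set.Iic (n : ℤ), B j with hA
  have hAeq : ∀ n : ℕ, ⇑(α ^ (n : ℤ)) '' Vm = A n := by
    intro n
    rw [hVm, Set.image_iInter ((α ^ (n : ℤ)).bijective)]
    have h1 : ∀ m : ℕ, ⇑(α ^ (n : ℤ)) '' (⇑(α ^ (-(m : ℤ))) '' (V : Set G)) = B ((n : ℤ) - m) := by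
      intro m; rw [hcomp, ← sub_eq_add_neg]
    ext x
    simp only [hA, Set.mem_iInter, Set.mem_iInter₂, h1, Set.mem_Iic]
    constructor
    · intro h j hj
      have h2 := h ((n : ℤ) - j).toNat
      rwa [Int.toNat_of_nonneg (by omega), sub_sub_cancel] at h2
    · intro h m
      exact h _ (by omega)
  have hVmA : Vm = A 0 := by
    have := hAeq 0
    simpa using this
  have hAsub : ∀ m n : ℕ, m ≤ n → A n ⊆ A m := by
    intro m n hmn x hx
    simp only [hA, Set.mem_iInter₂, Set.mem_Iic] at hx ⊢
    intro j hj
    exact hx j (hj.trans (by exact_mod_cast hmn))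
  have hAcl : ∀ n : ℕ, IsClosed (A n) := fun n => isClosed_biInter fun j _ => hBcl j
  have hAc : ∀ n : ℕ, IsCompact (A n) := by
    intro n
    have hsub : A n ⊆ B 0 := by rw [hA]; exact Set.biInter_subset_of_mem (by simp)
    exact (hBc 0).of_isClosed_subset (hAcl n) hsub
  have hAinter : ⋂ n : ℕ, A n = {1} := by
    rw [← hexp]
    ext x
    simp only [Set.mem_iInter, hA, Set.mem_iInter₂, Set.mem_Iic]
    constructor
    · intro h j
      exact h j.toNat j (Int.self_le_toNat j)
    · intro h n j _
      exact h j
  constructor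
  · intro n
    refine ⟨?_, ?_, ?_⟩
    · rw [hAeq n, hVmA]
      exact hAsub 0 n (Nat.zero_le n)
    · refine ⟨Subgroup.map (α ^ (n : ℤ)).toMonoidHom
        (⨅ m : ℕ, Subgroup.map (α ^ (-(m : ℤ))).toMonoidHom V), ?_⟩
      rw [Subgroup.coe_map, Subgroup.coe_iInf]
      simp only [Subgroup.coe_map, MulEquiv.coe_toMonoidHom]
      rfl
    · refine ⟨⋂ j ∈ Set.Ioc (0 : ℤ) (n : ℤ), B j,
        (Set.finite_Ioc _ _).isOpen_biInter (fun j _ => hBo j), ?_⟩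
      rw [hAeq n, hVmA]
      ext x
      simp only [hA, Set.mem_iInter₂, Set.mem_iInter, Set.mem_Iic, Set.mem_inter_iff, Set.mem_Ioc]
      constructor
      · intro h
        exact ⟨fun j hj => h j (hj.trans (by positivity)),
          fun j hj => h j hj.2⟩
      · rintro ⟨h1, h2⟩ j hj
        by_cases hj0 : j ≤ 0
        · exact h1 j hj0
        · exact h2 j ⟨by omega, hj⟩
  · rw [Filter.hasBasis_iff]
    intro t
    constructor
    · intro ht
      rcases mem_nhdsWithin.mp ht with ⟨U, hUo, hU1, hUsub⟩
      have hdir : Directed (fun x1 x2 : Set G => x1 ⊇ x2) A := by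
        intro i j
        exact ⟨max i j, hAsub i _ (le_max_left i j), hAsub j _ (le_max_right i j)⟩
      obtain ⟨n, hn⟩ := exists_subset_nhds_of_isCompact' hdir hAc hAcl
        (fun x hx => by
          rw [hAinter] at hx
          rw [Set.mem_singleton_iff] at hx
          exact hUo.mem_nhds (hx ▸ hU1))
      refine ⟨n, trivial, ?_⟩
      rw [hAeq n]
      intro x hx
      exact hUsub ⟨hn hx, hVmA ▸ hAsub 0 n (Nat.zero_le n) hx⟩
    · rintro ⟨n, -, hsub⟩
      rcases (by
        have := (?_ : ⇑(α ^ (n : ℤ)) '' Vm = Vm ∩ ⋂ j ∈ Set.Ioc (0 : ℤ) (n : ℤ), B j)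
        exact this
        · rw [hAeq n, hVmA]
          ext x
          simp only [hA, Set.mem_iInter₂, Set.mem_iInter, Set.mem_Iic, Set.mem_inter_iff, Set.mem_Ioc]
          constructor
          · intro h
            exact ⟨fun j hj => h j (hj.trans (by positivity)),
              fun j hj => h j hj.2⟩
          · rintro ⟨h1, h2⟩ j hj
            by_cases hj0 : j ≤ 0
            · exact h1 j hj0
            · exact h2 j ⟨by omega, hj⟩) with heq
      refine mem_nhdsWithin.mpr ⟨⋂ j ∈ Set.Ioc (0 : ℤ) (n : ℤ), B j,
        (Set.finite_Ioc _ _).isOpen_biInter (fun j _ => hBo j), ?_, ?_⟩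
      · simp only [Set.mem_iInter]
        intro j _
        exact hB1 j
      · intro x hx
        apply hsub
        rw [heq]
        exact ⟨hx.2, hx.1⟩
end

section
/- Let G be a totally disconnected, locally compact group, α an automorphism, N ⊆ G an α-stable closed normal subgroup and ᾱ the induced automorphism of G/N. If α|_N and ᾱ are both expansive, then α is expansive. -/
open Filter Topology

private lemma mem_zpow_image_aux {G : Type*} [Group G] (α : MulAut G) (n : ℤ) (S : Set G)
    (g : G) : g ∈ ⇑(α ^ n) '' S ↔ (α ^ (-n)) g ∈ S := by
  constructor
  · rintro ⟨s, hs, rfl⟩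
    have : (α ^ (-n)) ((α ^ n) s) = s := by
      rw [← MulAut.mul_apply, ← zpow_add, neg_add_cancel, zpow_zero, MulAut.one_apply]
    rwa [this]
  · intro h
    refine ⟨_, h, ?_⟩
    rw [← MulAut.mul_apply, ← zpow_add, add_neg_cancel, zpow_zero, MulAut.one_apply]

/-- If the restriction of α to a closed α-stable normal subgroup N and the induced
automorphism of G/N are both expansive, then α is expansive. -/
theorem expansive_of_restriction_and_quotient {G : Type*} [Group G] [TopologicalSpace G]
    [IsTopologicalGroup G] [T2Space G] [LocallyCompactSpace G] [TotallyDisconnectedSpace G]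
    (α : MulAut G) (hα : Continuous ⇑α) (hα' : Continuous ⇑(α⁻¹))
    (N : Subgroup G) [N.Normal] (hNc : IsClosed (N : Set G))
    (hNst : ⇑α '' (N : Set G) = (N : Set G))
    (β : MulAut (G ⧸ N)) (hβ : Continuous ⇑β) (hβ' : Continuous ⇑(β⁻¹))
    (hcompat : ∀ g : G, β ((g : G ⧸ N)) = ((α g : G) : G ⧸ N))
    (hN_exp : ∃ V ∈ 𝓝 (1 : G), ⋂ n : ℤ, ⇑(α ^ n) '' (V ∩ (N : Set G)) = {1})
    (hQ_exp : ∃ U ∈ 𝓝 (1 : G ⧸ N), ⋂ n : ℤ, ⇑(β ^ n) '' U = {1}) :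
    ∃ U ∈ 𝓝 (1 : G), ⋂ n : ℤ, ⇑(α ^ n) '' U = {1} := by
  obtain ⟨V, hV, hVexp⟩ := hN_exp
  obtain ⟨U, hU, hUexp⟩ := hQ_exp
  -- compatibility of inverses
  have hcompat' : ∀ g : G, β⁻¹ ((g : G ⧸ N)) = ((α⁻¹ g : G) : G ⧸ N) := by
    intro g
    have := hcompat (α⁻¹ g)
    rw [MulAut.apply_inv_self] at this
    rw [← this, ← MulAut.mul_apply, inv_mul_cancel, MulAut.one_apply]
  -- compatibility for all integer powers
  have hc : ∀ n : ℤ, ∀ g : G, (β ^ n) ((g : G ⧸ N)) = (((α ^ n) g : G) : G ⧸ N) := by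
    intro n
    induction n using Int.induction_on with
    | zero => intro g; simp
    | succ k ih =>
      intro g
      have h1 : (β ^ ((k : ℤ) + 1)) ((g : G ⧸ N)) = (β ^ (k : ℤ)) (β ((g : G ⧸ N))) := by
        rw [zpow_add, zpow_one, MulAut.mul_apply]
      rw [h1, hcompat, ih, zpow_add, zpow_one, MulAut.mul_apply]
    | pred k ih =>
      intro g
      have h1 : (β ^ (-(k : ℤ) - 1)) ((g : G ⧸ N)) = (β ^ (-(k : ℤ))) (β⁻¹ ((g : G ⧸ N))) := by
        rw [zpow_sub_one, MulAut.mul_apply]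
      rw [h1, hcompat', ih, zpow_sub_one, MulAut.mul_apply]
  -- N is stable under all integer powers of α
  have hNmem : ∀ g : G, g ∈ N → α g ∈ N := by
    intro g hg
    have : α g ∈ ⇑α '' (N : Set G) := ⟨g, hg, rfl⟩
    rwa [hNst] at this
  have hNmem' : ∀ g : G, g ∈ N → α⁻¹ g ∈ N := by
    intro g hg
    have : g ∈ ⇑α '' (N : Set G) := by rw [hNst]; exact hg
    obtain ⟨h, hh, rfl⟩ := this
    rwa [← MulAut.mul_apply, inv_mul_cancel, MulAut.one_apply]
  have hNz : ∀ n : ℤ, ∀ g : G, g ∈ N → (α ^ n) g ∈ N := by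
    intro n
    induction n using Int.induction_on with
    | zero => intro g hg; simpa using hg
    | succ k ih =>
      intro g hg
      have h1 : (α ^ ((k : ℤ) + 1)) g = (α ^ (k : ℤ)) (α g) := by
        rw [zpow_add, zpow_one, MulAut.mul_apply]
      rw [h1]; exact ih _ (hNmem g hg)
    | pred k ih =>
      intro g hg
      have h1 : (α ^ (-(k : ℤ) - 1)) g = (α ^ (-(k : ℤ))) (α⁻¹ g) := by
        rw [zpow_sub_one, MulAut.mul_apply]
      rw [h1]; exact ih _ (hNmem' g hg)
  -- the candidate neighbourhood
  have hqcont : Continuous (QuotientGroup.mk : G → G ⧸ N) := continuous_quotient_mk'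
  have hWU : (QuotientGroup.mk : G → G ⧸ N) ⁻¹' U ∈ 𝓝 (1 : G) := by
    have h1 : U ∈ 𝓝 (QuotientGroup.mk (1 : G) : G ⧸ N) := hU
    exact hqcont.continuousAt.preimage_mem_nhds h1
  refine ⟨V ∩ (QuotientGroup.mk : G → G ⧸ N) ⁻¹' U, inter_mem hV hWU, ?_⟩
  apply Set.eq_singleton_iff_unique_mem.2
  constructor
  · refine Set.mem_iInter.2 fun n => ⟨1, ⟨?_, ?_⟩, map_one _⟩
    · exact mem_of_mem_nhds hV
    · have : (QuotientGroup.mk (1 : G) : G ⧸ N) = 1 := rfl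
      simpa [Set.mem_preimage, this] using mem_of_mem_nhds hU
  · intro g hg
    have hgmem : ∀ n : ℤ, (α ^ (-n)) g ∈ V ∩ (QuotientGroup.mk : G → G ⧸ N) ⁻¹' U := by
      intro n
      exact (mem_zpow_image_aux α n _ g).1 (Set.mem_iInter.1 hg n)
    -- first: the image of g in G/N is 1
    have hq1 : (g : G ⧸ N) = 1 := by
      have : (g : G ⧸ N) ∈ ⋂ n : ℤ, ⇑(β ^ n) '' U := by
        refine Set.mem_iInter.2 fun n => (mem_zpow_image_aux β n U _).2 ?_
        have := (hgmem n).2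
        rw [Set.mem_preimage] at this
        rwa [hc (-n) g]
      rw [hUexp] at this
      exact this
    have hgN : g ∈ N := (QuotientGroup.eq_one_iff g).1 hq1
    -- now use expansiveness on N
    have : g ∈ ⋂ n : ℤ, ⇑(α ^ n) '' (V ∩ (N : Set G)) := by
      refine Set.mem_iInter.2 fun n => (mem_zpow_image_aux α n _ g).2 ?_
      exact ⟨(hgmem n).1, hNz (-n) g hgN⟩
    rw [hVexp] at this
    exact this
end

section
/- Let H be the 3-dimensional p-adic Heisenberg group (ℚ_p³ with multiplication (x₁,y₁,z₁)(x₂,y₂,z₂) = (x₁+x₂, y₁+y₂, z₁+z₂+x₁y₂)) and define automorphisms α₁(x,y,z) = (px, p⁻²y, p⁻¹z) and α₂(x,y,z) = (p²x, p⁻¹y, pz). Let G = H × H and α = α₁ × α₂. Then U_α = {(x,0,0) : x ∈ ℚ_p} × {(a,0,c) : a, c ∈ ℚ_p}, U_{α⁻¹} = {(0,y,z) : y,z ∈ ℚ_p} × {(0,b,0) : b ∈ ℚ_p}, and U_α U_{α⁻¹} = G, but neither U_α normalizes U_{α⁻¹} nor U_{α⁻¹} normalizes U_α. -/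
open Filter Topology Pointwise

/-- The 3-dimensional p-adic Heisenberg group. -/
@[ext] structure Heis (p : ℕ) [Fact p.Prime] where
  x : ℚ_[p]
  y : ℚ_[p]
  z : ℚ_[p]

namespace Heis

variable {p : ℕ} [Fact p.Prime]

noncomputable instance : TopologicalSpace (Heis p) :=
  TopologicalSpace.induced (fun h => (h.x, h.y, h.z)) inferInstance

noncomputable instance : Mul (Heis p) :=
  ⟨fun a b => ⟨a.x + b.x, a.y + b.y, a.z + b.z + a.x * b.y⟩⟩

noncomputable instance : One (Heis p) := ⟨⟨0, 0, 0⟩⟩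

noncomputable instance : Inv (Heis p) := ⟨fun a => ⟨-a.x, -a.y, -a.z + a.x * a.y⟩⟩

@[simp] lemma mul_x (a b : Heis p) : (a * b).x = a.x + b.x := rfl
@[simp] lemma mul_y (a b : Heis p) : (a * b).y = a.y + b.y := rfl
@[simp] lemma mul_z (a b : Heis p) : (a * b).z = a.z + b.z + a.x * b.y := rfl
@[simp] lemma one_x : (1 : Heis p).x = 0 := rfl
@[simp] lemma one_y : (1 : Heis p).y = 0 := rfl
@[simp] lemma one_z : (1 : Heis p).z = 0 := rfl
@[simp] lemma inv_x (a : Heis p) : a⁻¹.x = -a.x := rfl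
@[simp] lemma inv_y (a : Heis p) : a⁻¹.y = -a.y := rfl
@[simp] lemma inv_z (a : Heis p) : a⁻¹.z = -a.z + a.x * a.y := rfl

noncomputable instance : Group (Heis p) where
  mul_assoc a b c := by ext <;> simp <;> ring
  one_mul a := by ext <;> simp
  mul_one a := by ext <;> simp
  inv_mul_cancel a := by ext <;> simp <;> ring

/-- The automorphism `(x,y,z) ↦ (u x, v y, u v z)` of the Heisenberg group. -/
noncomputable def heisAut (u v : ℚ_[p]) (hu : u ≠ 0) (hv : v ≠ 0) : MulAut (Heis p) where
  toFun a := ⟨u * a.x, v * a.y, u * v * a.z⟩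
  invFun a := ⟨u⁻¹ * a.x, v⁻¹ * a.y, (u * v)⁻¹ * a.z⟩
  left_inv a := by ext <;> field_simp
  right_inv a := by ext <;> field_simp
  map_mul' a b := by ext <;> simp <;> ring

end Heis


section AuxLemmas
open Filter Topology Heis
variable {p : ℕ} [Fact p.Prime]

lemma aux_tend_zero {u : ℚ_[p]} (hu : ‖u‖ < 1) (c : ℚ_[p]) :
    Tendsto (fun n : ℕ => u ^ n * c) atTop (𝓝 0) := by
  simpa using (tendsto_pow_atTop_nhds_zero_of_norm_lt_one hu).mul_const c

lemma aux_eq_zero {u : ℚ_[p]} (hu0 : u ≠ 0) (hu : ‖u‖ < 1) {c : ℚ_[p]}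
    (h : Tendsto (fun n : ℕ => (u⁻¹) ^ n * c) atTop (𝓝 0)) : c = 0 := by
  have h2 : Tendsto (fun n : ℕ => u ^ n * ((u⁻¹) ^ n * c)) atTop (𝓝 0) := by
    simpa using (tendsto_pow_atTop_nhds_zero_of_norm_lt_one hu).mul h
  have h3 : (fun n : ℕ => u ^ n * ((u⁻¹) ^ n * c)) = fun _ => c := by
    funext n
    rw [← mul_assoc, ← mul_pow, mul_inv_cancel₀ hu0, one_pow, one_mul]
  rw [h3] at h2
  exact tendsto_nhds_unique tendsto_const_nhds h2

lemma aux_sq_norm : ‖((p:ℚ_[p]))^2‖ < 1 := by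
  rw [norm_pow]
  have h := Padic.norm_p_lt_one (p := p)
  nlinarith [norm_nonneg ((p:ℚ_[p]))]

lemma aux_tendsto_one_iff (f : ℕ → Heis p) :
    Tendsto f atTop (𝓝 1) ↔
      Tendsto (fun n => (f n).x) atTop (𝓝 0) ∧ Tendsto (fun n => (f n).y) atTop (𝓝 0) ∧
      Tendsto (fun n => (f n).z) atTop (𝓝 0) := by
  rw [nhds_induced (fun h : Heis p => (h.x, h.y, h.z)) 1, tendsto_comap_iff]
  show Tendsto (fun n => ((f n).x, (f n).y, (f n).z)) atTop
      (𝓝 ((0:ℚ_[p]), (0:ℚ_[p]), (0:ℚ_[p]))) ↔ _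
  simp only [Prod.tendsto_iff]

end AuxLemmas

set_option maxHeartbeats 1000000 in
open Heis in
/-- For the expansive automorphism `α = α₁ × α₂` of `H × H` (H the p-adic Heisenberg group),
with `α₁(x,y,z) = (px, p⁻²y, p⁻¹z)` and `α₂(x,y,z) = (p²x, p⁻¹y, pz)`, one has
`U_α = {(x,0,0)} × {(a,0,c)}`, `U_{α⁻¹} = {(0,y,z)} × {(0,b,0)}`, `U_α U_{α⁻¹} = G`, but
neither of `U_α`, `U_{α⁻¹}` normalizes the other. -/
theorem heisenberg_product_not_normalizing (p : ℕ) [Fact p.Prime]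
    (hp : (p : ℚ_[p]) ≠ 0)
    (α : MulAut (Heis p × Heis p))
    (hα : α = MulEquiv.prodCongr
      (heisAut (p : ℚ_[p]) ((p : ℚ_[p]) ^ 2)⁻¹ hp (by simp [hp]))
      (heisAut ((p : ℚ_[p]) ^ 2) ((p : ℚ_[p]))⁻¹ (by simp [hp]) (by simp [hp])))
    (Uα Uα' : Set (Heis p × Heis p))
    (hUα : Uα = {g : Heis p × Heis p | Tendsto (fun n : ℕ => (α ^ n) g) atTop (𝓝 1)})
    (hUα' : Uα' = {g : Heis p × Heis p | Tendsto (fun n : ℕ => (α⁻¹ ^ n) g) atTop (𝓝 1)}) :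
    Uα = {h : Heis p | h.y = 0 ∧ h.z = 0} ×ˢ {h : Heis p | h.y = 0} ∧
    Uα' = {h : Heis p | h.x = 0} ×ˢ {h : Heis p | h.x = 0 ∧ h.z = 0} ∧
    Uα * Uα' = Set.univ ∧
    ¬ (∀ a ∈ Uα, (fun g => a * g * a⁻¹) '' Uα' = Uα') ∧
    ¬ (∀ b ∈ Uα', (fun g => b * g * b⁻¹) '' Uα = Uα) := by
  subst hα hUα hUα'
  have hq1 : ‖(p : ℚ_[p])‖ < 1 := Padic.norm_p_lt_one
  have hq2 : ‖(p : ℚ_[p]) ^ 2‖ < 1 := aux_sq_norm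
  have hq2ne : (p : ℚ_[p]) ^ 2 ≠ 0 := pow_ne_zero _ hp
  set A : MulAut (Heis p × Heis p) := MulEquiv.prodCongr
      (heisAut (p : ℚ_[p]) ((p : ℚ_[p]) ^ 2)⁻¹ hp (by simp [hp]))
      (heisAut ((p : ℚ_[p]) ^ 2) ((p : ℚ_[p]))⁻¹ (by simp [hp]) (by simp [hp])) with hA
  have happ : ∀ g : Heis p × Heis p, A g =
      (⟨(p : ℚ_[p]) * g.1.x, ((p : ℚ_[p]) ^ 2)⁻¹ * g.1.y, (p : ℚ_[p]) * ((p : ℚ_[p]) ^ 2)⁻¹ * g.1.z⟩,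
       ⟨(p : ℚ_[p]) ^ 2 * g.2.x, (p : ℚ_[p])⁻¹ * g.2.y, (p : ℚ_[p]) ^ 2 * (p : ℚ_[p])⁻¹ * g.2.z⟩) := by
    intro g; rfl
  have hpow : ∀ (n : ℕ) (g : Heis p × Heis p), (A ^ n) g =
      (⟨(p : ℚ_[p]) ^ n * g.1.x, (((p : ℚ_[p]) ^ 2)⁻¹) ^ n * g.1.y, ((p : ℚ_[p])⁻¹) ^ n * g.1.z⟩,
       ⟨((p : ℚ_[p]) ^ 2) ^ n * g.2.x, ((p : ℚ_[p])⁻¹) ^ n * g.2.y, (p : ℚ_[p]) ^ n * g.2.z⟩) := by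
    intro n
    induction n with
    | zero => intro g; simp
    | succ n ih =>
      intro g
      have e1 : (p : ℚ_[p]) * ((p : ℚ_[p]) ^ 2)⁻¹ = (p : ℚ_[p])⁻¹ := by
        rw [sq, mul_inv_rev, ← mul_assoc, mul_inv_cancel₀ hp, one_mul]
      have e2 : (p : ℚ_[p]) ^ 2 * (p : ℚ_[p])⁻¹ = (p : ℚ_[p]) := by
        rw [sq, mul_assoc, mul_inv_cancel₀ hp, mul_one]
      rw [pow_succ', MulAut.mul_apply, ih g, happ]
      refine Prod.ext (Heis.ext ?_ ?_ ?_) (Heis.ext ?_ ?_ ?_)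
      · rw [pow_succ]; ring
      · rw [pow_succ]; ring
      · rw [e1, pow_succ]; ring
      · rw [pow_succ]; ring
      · rw [pow_succ]; ring
      · rw [e2, pow_succ]; ring
  have hpowinv : ∀ (n : ℕ) (g : Heis p × Heis p), (A⁻¹ ^ n) g =
      (⟨((p : ℚ_[p])⁻¹) ^ n * g.1.x, ((p : ℚ_[p]) ^ 2) ^ n * g.1.y, (p : ℚ_[p]) ^ n * g.1.z⟩,
       ⟨(((p : ℚ_[p]) ^ 2)⁻¹) ^ n * g.2.x, (p : ℚ_[p]) ^ n * g.2.y, ((p : ℚ_[p])⁻¹) ^ n * g.2.z⟩) := by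
    intro n g
    apply (A ^ n).injective
    have h1 : (A ^ n) ((A⁻¹ ^ n) g) = g := by
      rw [← MulAut.mul_apply, inv_pow, mul_inv_cancel, MulAut.one_apply]
    rw [h1, hpow]
    refine Prod.ext (Heis.ext ?_ ?_ ?_) (Heis.ext ?_ ?_ ?_) <;>
      simp only [inv_pow] <;>
      first
        | exact (mul_inv_cancel_left₀ (pow_ne_zero n hp) _).symm
        | exact (inv_mul_cancel_left₀ (pow_ne_zero n hp) _).symm
        | exact (mul_inv_cancel_left₀ (pow_ne_zero n hq2ne) _).symm
        | exact (inv_mul_cancel_left₀ (pow_ne_zero n hq2ne) _).symm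
  have key1 : {g : Heis p × Heis p | Tendsto (fun n : ℕ => (A ^ n) g) atTop (𝓝 1)}
      = {h : Heis p | h.y = 0 ∧ h.z = 0} ×ˢ {h : Heis p | h.y = 0} := by
    ext g
    simp only [Set.mem_setOf_eq, hpow, Set.mem_prod]
    rw [show (𝓝 (1 : Heis p × Heis p)) = 𝓝 ((1 : Heis p), (1 : Heis p)) from rfl,
      Prod.tendsto_iff]
    simp only [aux_tendsto_one_iff]
    constructor
    · rintro ⟨⟨-, h2, h3⟩, -, h5, -⟩
      exact ⟨⟨aux_eq_zero hq2ne hq2 h2, aux_eq_zero hp hq1 h3⟩, aux_eq_zero hp hq1 h5⟩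
    · rintro ⟨⟨h1, h2⟩, h3⟩
      rw [h1, h2, h3]
      simp only [mul_zero]
      exact ⟨⟨aux_tend_zero hq1 _, tendsto_const_nhds, tendsto_const_nhds⟩,
        aux_tend_zero hq2 _, tendsto_const_nhds, aux_tend_zero hq1 _⟩
  have key2 : {g : Heis p × Heis p | Tendsto (fun n : ℕ => (A⁻¹ ^ n) g) atTop (𝓝 1)}
      = {h : Heis p | h.x = 0} ×ˢ {h : Heis p | h.x = 0 ∧ h.z = 0} := by
    ext g
    simp only [Set.mem_setOf_eq, hpowinv, Set.mem_prod]
    rw [show (𝓝 (1 : Heis p × Heis p)) = 𝓝 ((1 : Heis p), (1 : Heis p)) from rfl,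
      Prod.tendsto_iff]
    simp only [aux_tendsto_one_iff]
    constructor
    · rintro ⟨⟨h1, -, -⟩, h4, -, h6⟩
      exact ⟨aux_eq_zero hp hq1 h1, aux_eq_zero hq2ne hq2 h4, aux_eq_zero hp hq1 h6⟩
    · rintro ⟨h1, h2, h3⟩
      rw [h1, h2, h3]
      simp only [mul_zero]
      exact ⟨⟨tendsto_const_nhds, aux_tend_zero hq2 _, aux_tend_zero hq1 _⟩,
        tendsto_const_nhds, aux_tend_zero hq1 _, tendsto_const_nhds⟩
  refine ⟨key1, key2, ?_, ?_, ?_⟩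
  · rw [key1, key2]
    ext g
    simp only [Set.mem_univ, iff_true, Set.mem_mul]
    refine ⟨(⟨g.1.x, 0, 0⟩, ⟨g.2.x, 0, g.2.z - g.2.x * g.2.y⟩), ?_,
      (⟨0, g.1.y, g.1.z - g.1.x * g.1.y⟩, ⟨0, g.2.y, 0⟩), ?_, ?_⟩
    · exact ⟨⟨rfl, rfl⟩, rfl⟩
    · exact ⟨rfl, rfl, rfl⟩
    · refine Prod.ext (Heis.ext ?_ ?_ ?_) (Heis.ext ?_ ?_ ?_) <;> simp <;> ring
  · rw [key1, key2]
    intro h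
    have h1 := h ((1 : Heis p), ⟨1, 0, 0⟩) (by exact ⟨⟨rfl, rfl⟩, rfl⟩)
    have h2 : ((1 : Heis p), (⟨0, 1, 1⟩ : Heis p)) ∈
        ({h : Heis p | h.x = 0} ×ˢ {h : Heis p | h.x = 0 ∧ h.z = 0} : Set (Heis p × Heis p)) := by
      rw [← h1]
      refine ⟨((1 : Heis p), (⟨0, 1, 0⟩ : Heis p)), ⟨rfl, rfl, rfl⟩, ?_⟩
      refine Prod.ext (Heis.ext ?_ ?_ ?_) (Heis.ext ?_ ?_ ?_) <;> simp
    exact one_ne_zero h2.2.2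
  · rw [key1, key2]
    intro h
    have h1 := h ((⟨0, 1, 0⟩ : Heis p), (1 : Heis p)) (by exact ⟨rfl, rfl, rfl⟩)
    have h2 : ((⟨1, 0, -1⟩ : Heis p), (1 : Heis p)) ∈
        ({h : Heis p | h.y = 0 ∧ h.z = 0} ×ˢ {h : Heis p | h.y = 0} : Set (Heis p × Heis p)) := by
      rw [← h1]
      refine ⟨((⟨1, 0, 0⟩ : Heis p), (1 : Heis p)), ⟨⟨rfl, rfl⟩, rfl⟩, ?_⟩
      refine Prod.ext (Heis.ext ?_ ?_ ?_) (Heis.ext ?_ ?_ ?_) <;> simp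
    exact one_ne_zero (neg_eq_zero.mp h2.1.2)
end

section
/- Let F be a nontrivial finite abelian group, H₁ = F^(⁻ℕ) × F^(ℕ₀) (the restricted product: sequences indexed by ℤ that vanish for sufficiently negative indices, i.e. elements (f_n)_{n∈ℤ} of F^ℤ with f_n = 1 for all but finitely many n < 0), with F^(ℕ₀) := F^{ℕ₀} compact open, and similarly H₂ = F^{−ℕ} × F^(ℕ₀-restricted) with vanishing at sufficiently positive indices. Let α be the right-shift on G := H₁ × H₂. Then the map q : G → F^ℤ, (f, g) ↦ f + g is a continuous, open, surjective homomorphism with discrete kernel, and the contraction group U_{ᾱ} of the right-shift ᾱ on F^ℤ equals {(f_n) ∈ F^ℤ : f_n = 1 for all but finitely many n < 0}, which is a dense proper (hence non-closed) subgroup of F^ℤ. -/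
open Filter Topology

section

variable (F : Type*) [AddCommGroup F] [Fintype F] [Nontrivial F]
  [TopologicalSpace F] [DiscreteTopology F]

/-- Restricted product `F^(−ℕ) × F^(ℕ₀)`: sequences vanishing at all but finitely many
negative indices; the negative part is discrete, the nonnegative part compact. -/
abbrev RestrProdLeft := ({n : ℤ // n < 0} →₀ F) × ({n : ℤ // 0 ≤ n} → F)

/-- Restricted product `F^{−ℕ} × F^(ℕ₀)`: sequences vanishing at all but finitely many
nonnegative indices; the negative part is compact, the nonnegative part discrete. -/
abbrev RestrProdRight := ({n : ℤ // n < 0} → F) × ({n : ℤ // 0 ≤ n} →₀ F)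

noncomputable instance : TopologicalSpace ({n : ℤ // n < 0} →₀ F) := ⊥
noncomputable instance : TopologicalSpace ({n : ℤ // 0 ≤ n} →₀ F) := ⊥

/-- Interpreting an element of `H₁` as a two-sided sequence. -/
noncomputable def emb₁ (h : RestrProdLeft F) : ℤ → F := fun n =>
  if hn : n < 0 then h.1 ⟨n, hn⟩ else h.2 ⟨n, not_lt.1 hn⟩

/-- Interpreting an element of `H₂` as a two-sided sequence. -/
noncomputable def emb₂ (h : RestrProdRight F) : ℤ → F := fun n =>
  if hn : n < 0 then h.1 ⟨n, hn⟩ else h.2 ⟨n, not_lt.1 hn⟩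

/-- The addition map `q : G = H₁ × H₂ → F^ℤ`. -/
noncomputable def qmap (g : RestrProdLeft F × RestrProdRight F) : ℤ → F :=
  emb₁ F g.1 + emb₂ F g.2

/-- The right shift on `F^ℤ`. -/
def rshift (f : ℤ → F) : ℤ → F := fun n => f (n - 1)

end

section
set_option linter.unusedSectionVars false
variable (F : Type*) [AddCommGroup F] [Fintype F] [Nontrivial F]
  [TopologicalSpace F] [DiscreteTopology F]

instance : DiscreteTopology ({n : ℤ // n < 0} →₀ F) := ⟨rfl⟩
instance : DiscreteTopology ({n : ℤ // 0 ≤ n} →₀ F) := ⟨rfl⟩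

lemma qmap_add (a b : RestrProdLeft F × RestrProdRight F) :
    qmap F (a + b) = qmap F a + qmap F b := by
  funext n
  simp only [qmap, emb₁, emb₂, Pi.add_apply, Prod.fst_add, Prod.snd_add, Finsupp.add_apply]
  split_ifs <;> abel

lemma qmap_continuous : Continuous (qmap F) := by
  refine continuous_pi fun n => ?_
  simp only [qmap, Pi.add_apply, emb₁, emb₂]
  rcases lt_or_ge n 0 with hn | hn
  · simp only [dif_pos hn]
    refine Continuous.add ?_ ?_
    · exact Continuous.comp (g := fun x : {m : ℤ // m < 0} →₀ F => x ⟨n, hn⟩)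
        continuous_of_discreteTopology continuous_fst.fst
    · exact (continuous_apply _).comp continuous_snd.fst
  · simp only [dif_neg (not_lt.2 hn)]
    refine Continuous.add ?_ ?_
    · exact (continuous_apply _).comp continuous_fst.snd
    · exact Continuous.comp (g := fun x : {m : ℤ // 0 ≤ m} →₀ F => x ⟨n, not_lt.1 (not_lt.2 hn)⟩)
        continuous_of_discreteTopology continuous_snd.snd

noncomputable def smap (f : ℤ → F) : RestrProdLeft F × RestrProdRight F :=
  ((0, fun n => f n.1), (fun n => f n.1, 0))

lemma qmap_smap (f : ℤ → F) : qmap F (smap F f) = f := by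
  funext n
  simp only [qmap, smap, Pi.add_apply, emb₁, emb₂]
  split_ifs with hn <;> simp

lemma smap_continuous : Continuous (smap F) := by
  refine Continuous.prodMk (Continuous.prodMk continuous_const ?_)
    (Continuous.prodMk ?_ continuous_const) <;>
  exact continuous_pi fun n => continuous_apply _

lemma rshift_iter (f : ℤ → F) (k : ℕ) (n : ℤ) : (rshift F)^[k] f n = f (n - k) := by
  induction k generalizing f n with
  | zero => simp
  | succ k ih =>
    rw [Function.iterate_succ_apply]
    show (rshift F)^[k] (rshift F f) n = _
    rw [ih]
    show f (n - k - 1) = _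
    congr 1
    push_cast
    ring


instance : IsTopologicalAddGroup ({n : ℤ // n < 0} →₀ F) :=
  { continuous_add := continuous_of_discreteTopology
    continuous_neg := continuous_of_discreteTopology }

instance : IsTopologicalAddGroup ({n : ℤ // 0 ≤ n} →₀ F) :=
  { continuous_add := continuous_of_discreteTopology
    continuous_neg := continuous_of_discreteTopology }

instance : IsTopologicalAddGroup F :=
  { continuous_add := continuous_of_discreteTopology
    continuous_neg := continuous_of_discreteTopology }

lemma smap_zero : smap F 0 = 0 := by
  refine Prod.ext (Prod.ext rfl ?_) (Prod.ext ?_ rfl) <;> rfl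

lemma qmap_open : IsOpenMap (qmap F) := by
  intro U hU
  rw [isOpen_iff_mem_nhds]
  rintro _ ⟨x, hxU, rfl⟩
  have ht : Continuous fun z : ℤ → F => x + smap F (z - qmap F x) :=
    continuous_const.add ((smap_continuous F).comp (continuous_id.sub continuous_const))
  have hop : IsOpen ((fun z : ℤ → F => x + smap F (z - qmap F x)) ⁻¹' U) := hU.preimage ht
  refine mem_nhds_iff.2 ⟨_, ?_, hop, ?_⟩
  · intro z hz
    refine ⟨_, hz, ?_⟩
    rw [qmap_add, qmap_smap]
    abel
  · show x + smap F (qmap F x - qmap F x) ∈ U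
    simpa [smap_zero] using hxU

lemma qmap_surj : Function.Surjective (qmap F) := fun f => ⟨smap F f, qmap_smap F f⟩

lemma ker_key (y : RestrProdLeft F × RestrProdRight F) (hy : qmap F y = 0) :
    (∀ m : {n : ℤ // 0 ≤ n}, y.1.2 m = - y.2.2 m) ∧
    (∀ m : {n : ℤ // n < 0}, y.2.1 m = - y.1.1 m) := by
  constructor <;> intro m
  · have h := congrFun hy m.1
    simp only [qmap, Pi.add_apply, emb₁, emb₂, dif_neg (not_lt.2 m.2), Subtype.coe_eta,
      Pi.zero_apply] at h
    exact eq_neg_of_add_eq_zero_left h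
  · have h := congrFun hy m.1
    simp only [qmap, Pi.add_apply, emb₁, emb₂, dif_pos m.2, Subtype.coe_eta,
      Pi.zero_apply] at h
    exact eq_neg_of_add_eq_zero_right h

lemma ker_discrete : DiscreteTopology ↥(qmap F ⁻¹' {0}) := by
  rw [discreteTopology_iff_isOpen_singleton]
  rintro ⟨x, hx⟩
  rw [isOpen_induced_iff]
  refine ⟨{g | g.1.1 = x.1.1} ∩ {g | g.2.2 = x.2.2}, ?_, ?_⟩
  · exact ((isOpen_discrete {x.1.1}).preimage continuous_fst.fst).inter
      ((isOpen_discrete {x.2.2}).preimage continuous_snd.snd)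
  · ext ⟨g, hg⟩
    simp only [Set.mem_preimage, Set.mem_inter_iff, Set.mem_setOf_eq, Set.mem_singleton_iff]
    constructor
    · rintro ⟨h1, h2⟩
      have hgk := ker_key F g (by simpa using hg)
      have hxk := ker_key F x (by simpa using hx)
      refine Subtype.ext (Prod.ext (Prod.ext h1 ?_) (Prod.ext ?_ h2))
      · funext m; rw [hgk.1 m, hxk.1 m, h2]
      · funext m; rw [hgk.2 m, hxk.2 m, h1]
    · intro h
      obtain rfl : g = x := congrArg Subtype.val h
      exact ⟨rfl, rfl⟩

lemma contraction_eq :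
    {f : ℤ → F | Tendsto (fun k : ℕ => (rshift F)^[k] f) atTop (𝓝 0)}
      = {f : ℤ → F | {n : ℤ | n < 0 ∧ f n ≠ 0}.Finite} := by
  ext f
  simp only [Set.mem_setOf_eq]
  constructor
  · intro h
    have h0 := (tendsto_pi_nhds.1 h) 0
    rw [Pi.zero_apply, nhds_discrete, tendsto_pure] at h0
    obtain ⟨K, hK⟩ := eventually_atTop.1 h0
    refine Set.Finite.subset (Set.finite_Icc (-(K : ℤ)) 0) ?_
    rintro n ⟨hn, hfn⟩
    refine ⟨?_, hn.le⟩
    by_contra hlt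
    push_neg at hlt
    apply hfn
    have hKle : K ≤ (-n).toNat := by omega
    have := hK (-n).toNat hKle
    rw [rshift_iter] at this
    rw [Int.toNat_of_nonneg (by omega : (0:ℤ) ≤ -n)] at this
    simpa using this
  · intro h
    rw [tendsto_pi_nhds]
    intro n
    rw [Pi.zero_apply, nhds_discrete, tendsto_pure]
    obtain ⟨a, ha⟩ := h.bddBelow
    refine eventually_atTop.2 ⟨(n - a + 1).toNat + (n + 1).toNat, fun k hk => ?_⟩
    rw [rshift_iter]
    by_contra hfn
    have h1 := Int.self_le_toNat (n - a + 1)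
    have h2 := Int.self_le_toNat (n + 1)
    have h3 : ((n - a + 1).toNat + (n + 1).toNat : ℤ) ≤ k := by exact_mod_cast hk
    have hmem : n - (k : ℤ) ∈ {m : ℤ | m < 0 ∧ f m ≠ 0} := ⟨by omega, hfn⟩
    have := ha hmem
    omega

lemma dense_S : Dense {f : ℤ → F | {n : ℤ | n < 0 ∧ f n ≠ 0}.Finite} := by
  intro f
  have htend : Tendsto (fun k : ℕ => fun n : ℤ => if n < -(k : ℤ) then 0 else f n)
      atTop (𝓝 f) := by
    rw [tendsto_pi_nhds]
    intro n
    rw [nhds_discrete, tendsto_pure]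
    refine eventually_atTop.2 ⟨(-n).toNat, fun k hk => ?_⟩
    rw [if_neg]
    have h1 := Int.self_le_toNat (-n)
    have h2 : ((-n).toNat : ℤ) ≤ k := by exact_mod_cast hk
    omega
  refine mem_closure_of_tendsto htend (Eventually.of_forall fun k => ?_)
  refine Set.Finite.subset (Set.finite_Icc (-(k : ℤ)) 0) ?_
  rintro n ⟨hn, hfn⟩
  refine ⟨?_, hn.le⟩
  by_contra hlt
  push_neg at hlt
  exact hfn (if_pos (by omega))

lemma not_univ_S : {f : ℤ → F | {n : ℤ | n < 0 ∧ f n ≠ 0}.Finite} ≠ Set.univ := by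
  obtain ⟨a, ha⟩ := exists_ne (0 : F)
  intro heq
  have hf : (fun _ : ℤ => a) ∈ {f : ℤ → F | {n : ℤ | n < 0 ∧ f n ≠ 0}.Finite} :=
    heq ▸ Set.mem_univ _
  have : {n : ℤ | n < 0 ∧ a ≠ 0} = Set.Iio 0 := by ext n; simp [ha]
  rw [Set.mem_setOf_eq, this] at hf
  exact Set.Iio_infinite (0 : ℤ) hf

end

/-- `q : G → F^ℤ` is a continuous, open, surjective homomorphism with discrete kernel,
and the contraction group of the right shift on `F^ℤ` is the set of sequences vanishing
at all but finitely many negative indices; it is a dense, proper, non-closed subgroup. -/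
theorem restricted_product_shift (F : Type*) [AddCommGroup F] [Fintype F] [Nontrivial F]
    [TopologicalSpace F] [DiscreteTopology F] :
    (∀ a b : RestrProdLeft F × RestrProdRight F, qmap F (a + b) = qmap F a + qmap F b) ∧
    Continuous (qmap F) ∧
    IsOpenMap (qmap F) ∧
    Function.Surjective (qmap F) ∧
    DiscreteTopology ↥(qmap F ⁻¹' {0}) ∧
    {f : ℤ → F | Tendsto (fun k : ℕ => (rshift F)^[k] f) atTop (𝓝 0)}
      = {f : ℤ → F | {n : ℤ | n < 0 ∧ f n ≠ 0}.Finite} ∧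
    Dense {f : ℤ → F | {n : ℤ | n < 0 ∧ f n ≠ 0}.Finite} ∧
    {f : ℤ → F | {n : ℤ | n < 0 ∧ f n ≠ 0}.Finite} ≠ Set.univ ∧
    ¬ IsClosed {f : ℤ → F | {n : ℤ | n < 0 ∧ f n ≠ 0}.Finite} := by
  refine ⟨qmap_add F, qmap_continuous F, qmap_open F, qmap_surj F, ker_discrete F,
    contraction_eq F, dense_S F, not_univ_S F, fun hcl => ?_⟩
  exact not_univ_S F (by rw [← hcl.closure_eq, (dense_S F).closure_eq])
end
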